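/- Let N ≥ 2, n ≥ 2, and let χ⁽¹⁾,…,χ⁽ⁿ⁾ be the vanishing-order sequences of n nonzero partitions of N. For k ∈ {2,…,N} define d_k := (n−1)k − 1 − ∑_{a=1}^{n} χ⁽ᵃ⁾_k (an integer). If d_N ≥ −1 and ∑_{k=2}^{N} (d_k + 1) ≥ 0, then d_k ≥ −1 for every k ∈ {2,…,N}. (This expresses that, in the presence of a regular puncture, Simpson's two conditions for the existence of the irreducible character variety are equivalent to the 'OK' condition deg(L_k) ≥ −1 for all k.) -/

import Mathlib

/-- `p` (with parts indexed from 1) is a partition of `N`: the parts are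
nonincreasing, sum to `N`, and vanish beyond index `N`. -/
def IsPartitionOf (N : ℕ) (p : ℕ → ℕ) : Prop :=
  (∀ i, 1 ≤ i → p (i + 1) ≤ p i) ∧
  (∑ j ∈ Finset.Icc 1 N, p j = N) ∧
  (∀ i, N < i → p i = 0)

/-- The vanishing order at `k` of the partition `p`: the least positive
integer `i` such that `p 1 + ⋯ + p i ≥ k`. -/
noncomputable def chiOf (p : ℕ → ℕ) (k : ℕ) : ℕ :=
  sInf {i | 1 ≤ i ∧ k ≤ ∑ j ∈ Finset.Icc 1 i, p j}

/-- `χ` is the vanishing-order sequence, on `{1,…,N}`, of the partition `p` of `N`. -/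
def IsVanishingOrderSeq (N : ℕ) (p : ℕ → ℕ) (χ : ℕ → ℕ) : Prop :=
  IsPartitionOf N p ∧ ∀ k, 1 ≤ k → k ≤ N → χ k = chiOf p k

lemma p_anti {p : ℕ → ℕ} (hp : ∀ i, 1 ≤ i → p (i+1) ≤ p i) {i i' : ℕ}
    (h1 : 1 ≤ i) (hle : i ≤ i') : p i' ≤ p i := by
  obtain ⟨d, rfl⟩ := Nat.exists_eq_add_of_le hle
  induction d with
  | zero => simp
  | succ d ih =>
      have : p (i + d + 1) ≤ p (i + d) := hp _ (by omega)
      calc p (i + (d+1)) = p (i + d + 1) := by ring_nf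
        _ ≤ p (i + d) := this
        _ ≤ p i := ih (by omega)

lemma S_mono (p : ℕ → ℕ) {i i' : ℕ} (h : i ≤ i') :
    ∑ j ∈ Finset.Icc 1 i, p j ≤ ∑ j ∈ Finset.Icc 1 i', p j :=
  Finset.sum_le_sum_of_subset (Finset.Icc_subset_Icc_right h)

lemma S_split (p : ℕ → ℕ) {r m : ℕ} (h : r ≤ m) :
    ∑ j ∈ Finset.Icc 1 m, p j
      = (∑ j ∈ Finset.Icc 1 r, p j) + ∑ j ∈ Finset.Icc (r+1) m, p j := by
  rw [show (1:ℕ) = 0 + 1 from rfl, Finset.Icc_add_one_left_eq_Ioc, Finset.Icc_add_one_left_eq_Ioc, Nat.zero_add,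
    Finset.Icc_add_one_left_eq_Ioc,
    Finset.sum_Ioc_consecutive _ (Nat.zero_le r) h]

lemma chi_spec {N : ℕ} {p : ℕ → ℕ} (hp : IsPartitionOf N p) {k : ℕ}
    (hk1 : 1 ≤ k) (hkN : k ≤ N) :
    1 ≤ chiOf p k ∧ k ≤ ∑ j ∈ Finset.Icc 1 (chiOf p k), p j := by
  have : N ∈ {i | 1 ≤ i ∧ k ≤ ∑ j ∈ Finset.Icc 1 i, p j} := ⟨by omega, by rw [hp.2.1]; exact hkN⟩
  exact Nat.sInf_mem ⟨N, this⟩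

lemma chi_le {p : ℕ → ℕ} {k i : ℕ} (h1 : 1 ≤ i) (h2 : k ≤ ∑ j ∈ Finset.Icc 1 i, p j) :
    chiOf p k ≤ i := Nat.sInf_le ⟨h1, h2⟩

lemma chi_min {p : ℕ → ℕ} {k i : ℕ} (h1 : 1 ≤ i) (hlt : i < chiOf p k) :
    ∑ j ∈ Finset.Icc 1 i, p j < k := by
  by_contra hc
  push_neg at hc
  exact absurd (chi_le h1 hc) (by omega)

lemma chiN_le {N : ℕ} {p : ℕ → ℕ} (hp : IsPartitionOf N p) (hN : 1 ≤ N) :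
    chiOf p N ≤ N := chi_le hN (hp.2.1).ge

lemma chiN_sum {N : ℕ} {p : ℕ → ℕ} (hp : IsPartitionOf N p) (hN : 1 ≤ N) :
    ∑ j ∈ Finset.Icc 1 (chiOf p N), p j = N := by
  have h1 := (chi_spec hp hN le_rfl).2
  have h2 : ∑ j ∈ Finset.Icc 1 (chiOf p N), p j ≤ N := by
    calc ∑ j ∈ Finset.Icc 1 (chiOf p N), p j ≤ ∑ j ∈ Finset.Icc 1 N, p j :=
          S_mono p (chiN_le hp hN)
      _ = N := hp.2.1
  omega

lemma sum_Icc_card (p : ℕ → ℕ) (a b c : ℕ) (h : ∀ i ∈ Finset.Icc a b, p i = c) :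
    ∑ j ∈ Finset.Icc a b, p j = (b + 1 - a) * c := by
  rw [Finset.sum_congr rfl h, Finset.sum_const, Nat.card_Icc, smul_eq_mul]

lemma all_eq_of_card_mul_le {s : Finset ℕ} {f : ℕ → ℕ} {c : ℕ}
    (hle : ∀ i ∈ s, c ≤ f i) (hsum : ∑ i ∈ s, f i ≤ s.card * c) :
    ∀ i ∈ s, f i = c := by
  intro i hi
  by_contra hne
  have hlt : c < f i := lt_of_le_of_ne (hle i hi) (Ne.symm hne)
  have h2 : ∑ _i ∈ s, c < ∑ i ∈ s, f i :=
    Finset.sum_lt_sum hle ⟨i, hi, hlt⟩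
  rw [Finset.sum_const, smul_eq_mul] at h2
  omega

lemma all_eq_of_le_card_mul {s : Finset ℕ} {f : ℕ → ℕ} {c : ℕ}
    (hle : ∀ i ∈ s, f i ≤ c) (hsum : s.card * c ≤ ∑ i ∈ s, f i) :
    ∀ i ∈ s, f i = c := by
  intro i hi
  by_contra hne
  have hlt : f i < c := lt_of_le_of_ne (hle i hi) hne
  have h2 : ∑ i ∈ s, f i < ∑ _i ∈ s, c :=
    Finset.sum_lt_sum hle ⟨i, hi, hlt⟩
  rw [Finset.sum_const, smul_eq_mul] at h2
  omega

section chord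
variable {N : ℕ} {p : ℕ → ℕ}

lemma chi_chord (hp : IsPartitionOf N p) {j : ℕ} (hj2 : 2 ≤ j) (hjN : j ≤ N) :
    N * (chiOf p j - 1) ≤ (j - 1) * chiOf p N := by
  have hN1 : 1 ≤ N := by omega
  set r := chiOf p j - 1 with hr
  rcases Nat.eq_zero_or_pos r with h0 | hrpos
  · simp [h0]
  -- r ≥ 1
  have hchij : 1 ≤ chiOf p j := (chi_spec hp (by omega) hjN).1
  set m := chiOf p N with hm
  have hm1 : 1 ≤ m := (chi_spec hp hN1 le_rfl).1
  have hSm : ∑ x ∈ Finset.Icc 1 m, p x = N := chiN_sum hp hN1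
  have hjm : chiOf p j ≤ m := chi_le hm1 (by rw [hSm]; exact hjN)
  have hrm : r < m := by omega
  have hSr_lt : ∑ x ∈ Finset.Icc 1 r, p x < j := chi_min hrpos (by omega)
  set Sr := ∑ x ∈ Finset.Icc 1 r, p x with hSr
  set T := ∑ x ∈ Finset.Icc (r+1) m, p x with hT
  have hsplit : N = Sr + T := by rw [← hSm]; exact S_split p hrm.le
  have hA : r * p r ≤ Sr := by
    have := Finset.card_nsmul_le_sum (Finset.Icc 1 r) p (p r) (fun x hx => by
      obtain ⟨hx1, hx2⟩ := Finset.mem_Icc.mp hx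
      exact p_anti hp.1 hx1 hx2)
    simpa [Nat.card_Icc, smul_eq_mul] using this
  have hB : T ≤ (m - r) * p (r+1) := by
    have := Finset.sum_le_card_nsmul (Finset.Icc (r+1) m) p (p (r+1)) (fun x hx => by
      obtain ⟨hx1, hx2⟩ := Finset.mem_Icc.mp hx
      exact p_anti hp.1 (by omega) hx1)
    simpa [Nat.card_Icc, smul_eq_mul] using this
  have hC : p (r+1) ≤ p r := hp.1 r hrpos
  -- chain
  obtain ⟨q, hq⟩ : ∃ q, m = r + q := ⟨m - r, by omega⟩
  have hq1 : 1 ≤ q := by omega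
  have hmr : m - r = q := by omega
  rw [hmr] at hB
  obtain ⟨j', hj'⟩ : ∃ j', j = j' + 1 := ⟨j - 1, by omega⟩
  have hgoal : N * r ≤ j' * m := by
    have c1 : N * r = r * Sr + r * T := by rw [hsplit]; ring
    have c2 : r * T ≤ r * (q * p (r+1)) := Nat.mul_le_mul_left r hB
    have c3 : r * (q * p (r+1)) ≤ q * (r * p r) := by
      calc r * (q * p (r+1)) = (r * q) * p (r+1) := by ring
        _ ≤ (r * q) * p r := Nat.mul_le_mul_left _ hC
        _ = q * (r * p r) := by ring
    have c4 : q * (r * p r) ≤ q * Sr := Nat.mul_le_mul_left q hA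
    have c5 : r * Sr + q * Sr = m * Sr := by rw [hq]; ring
    have c6 : m * Sr ≤ m * j' := Nat.mul_le_mul_left m (by omega)
    calc N * r = r * Sr + r * T := c1
      _ ≤ r * Sr + q * Sr := by omega
      _ = m * Sr := c5
      _ ≤ m * j' := c6
      _ = j' * m := by ring
  calc N * r = r * N := by ring
    _ ≤ (j - 1) * m := by rw [hj']; simpa [Nat.mul_comm] using hgoal

lemma chi_chord_eq (hp : IsPartitionOf N p) {j : ℕ} (hj2 : 2 ≤ j) (hjN : j ≤ N)
    (heq : (j - 1) * chiOf p N = N * (chiOf p j - 1)) :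
    (∀ i, 1 ≤ i → i ≤ chiOf p N → p i = p 1) ∧ N = chiOf p N * p 1 := by
  have hN1 : 1 ≤ N := by omega
  set r := chiOf p j - 1 with hr
  set m := chiOf p N with hm
  have hchij : 1 ≤ chiOf p j := (chi_spec hp (by omega) hjN).1
  have hm1 : 1 ≤ m := (chi_spec hp hN1 le_rfl).1
  have hrpos : 1 ≤ r := by
    rcases Nat.eq_zero_or_pos r with h0 | h
    · exfalso; rw [h0, Nat.mul_zero] at heq
      have : 0 < (j-1) * m := Nat.mul_pos (by omega) hm1
      omega
    · exact h
  have hSm : ∑ x ∈ Finset.Icc 1 m, p x = N := chiN_sum hp hN1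
  have hjm : chiOf p j ≤ m := chi_le hm1 (by rw [hSm]; exact hjN)
  have hrm : r < m := by omega
  have hSr_lt : ∑ x ∈ Finset.Icc 1 r, p x < j := chi_min hrpos (by omega)
  set Sr := ∑ x ∈ Finset.Icc 1 r, p x with hSr
  set T := ∑ x ∈ Finset.Icc (r+1) m, p x with hT
  have hsplit : N = Sr + T := by rw [← hSm]; exact S_split p hrm.le
  have hA : r * p r ≤ Sr := by
    have := Finset.card_nsmul_le_sum (Finset.Icc 1 r) p (p r) (fun x hx => by
      obtain ⟨hx1, hx2⟩ := Finset.mem_Icc.mp hx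
      exact p_anti hp.1 hx1 hx2)
    simpa [Nat.card_Icc, smul_eq_mul] using this
  obtain ⟨q, hq⟩ : ∃ q, m = r + q := ⟨m - r, by omega⟩
  have hq1 : 1 ≤ q := by omega
  have hB : T ≤ q * p (r+1) := by
    have := Finset.sum_le_card_nsmul (Finset.Icc (r+1) m) p (p (r+1)) (fun x hx => by
      obtain ⟨hx1, hx2⟩ := Finset.mem_Icc.mp hx
      exact p_anti hp.1 (by omega) hx1)
    have hcard : (Finset.Icc (r+1) m).card = q := by rw [Nat.card_Icc]; omega
    rw [hcard, smul_eq_mul] at this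
    exact this
  have hC : p (r+1) ≤ p r := hp.1 r hrpos
  -- the chain of inequalities, now with equality at the ends
  have a12 : N * r = r * Sr + r * T := by rw [hsplit]; ring
  have a23 : r * T ≤ r * (q * p (r+1)) := Nat.mul_le_mul_left r hB
  have a34 : r * (q * p (r+1)) ≤ q * (r * p r) := by
    calc r * (q * p (r+1)) = (r * q) * p (r+1) := by ring
      _ ≤ (r * q) * p r := Nat.mul_le_mul_left _ hC
      _ = q * (r * p r) := by ring
  have a45 : q * (r * p r) ≤ q * Sr := Nat.mul_le_mul_left q hA
  have a56 : r * Sr + q * Sr = m * Sr := by rw [hq]; ring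
  have a67 : m * Sr ≤ m * (j - 1) := Nat.mul_le_mul_left m (by omega)
  have atop : m * (j - 1) = N * r := by rw [← heq]; ring
  -- hence everything is equal
  have e2 : r * T = r * (q * p (r+1)) := by omega
  have e3 : r * (q * p (r+1)) = q * (r * p r) := by omega
  have e4 : q * (r * p r) = q * Sr := by omega
  have eT : T = q * p (r+1) := Nat.eq_of_mul_eq_mul_left hrpos e2
  have ePr : p (r+1) = p r := by
    have : (r * q) * p (r+1) = (r * q) * p r := by
      calc (r*q) * p (r+1) = r * (q * p (r+1)) := by ring
        _ = q * (r * p r) := e3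
        _ = (r*q) * p r := by ring
    exact Nat.eq_of_mul_eq_mul_left (by positivity) this
  have eSr : Sr = r * p r := (Nat.eq_of_mul_eq_mul_left hq1 e4).symm
  -- all parts in [1, r] equal p r
  have hlow : ∀ i ∈ Finset.Icc 1 r, p i = p r := by
    apply all_eq_of_card_mul_le
    · intro i hi
      obtain ⟨hi1, hi2⟩ := Finset.mem_Icc.mp hi
      exact p_anti hp.1 hi1 hi2
    · rw [Nat.card_Icc]
      have h' : r + 1 - 1 = r := by omega
      rw [h', ← eSr]
  -- all parts in [r+1, m] equal p (r+1)
  have hhigh : ∀ i ∈ Finset.Icc (r+1) m, p i = p (r+1) := by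
    apply all_eq_of_le_card_mul
    · intro i hi
      obtain ⟨hi1, hi2⟩ := Finset.mem_Icc.mp hi
      exact p_anti hp.1 (by omega) hi1
    · rw [Nat.card_Icc]
      have h' : (m + 1 - (r+1)) = q := by omega
      rw [h', ← eT]
  have hall : ∀ i, 1 ≤ i → i ≤ m → p i = p 1 := by
    have hp1 : p 1 = p r := hlow 1 (Finset.mem_Icc.mpr ⟨le_rfl, hrpos⟩)
    intro i hi1 him
    rcases le_or_gt i r with hcase | hcase
    · rw [hlow i (Finset.mem_Icc.mpr ⟨hi1, hcase⟩), hp1]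
    · rw [hhigh i (Finset.mem_Icc.mpr ⟨by omega, him⟩), ePr, hp1]
  refine ⟨hall, ?_⟩
  calc N = ∑ x ∈ Finset.Icc 1 m, p x := hSm.symm
    _ = (m + 1 - 1) * p 1 := sum_Icc_card p 1 m (p 1) (fun i hi => by
          obtain ⟨hi1, hi2⟩ := Finset.mem_Icc.mp hi
          exact hall i hi1 hi2)
    _ = m * p 1 := by simp

end chord

lemma chi_all2 {N m : ℕ} {p : ℕ → ℕ} (hNm : N = m * 2)
    (hall : ∀ i, 1 ≤ i → i ≤ m → p i = 2)
    {k : ℕ} (hk1 : 1 ≤ k) (hkN : k ≤ N) : chiOf p k = (k+1)/2 := by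
  have hm1 : 1 ≤ m := by omega
  have hS : ∀ i, i ≤ m → ∑ j ∈ Finset.Icc 1 i, p j = 2 * i := by
    intro i him
    rw [sum_Icc_card p 1 i 2 (fun x hx => by
      obtain ⟨h1, h2⟩ := Finset.mem_Icc.mp hx
      exact hall x h1 (h2.trans him))]
    omega
  set i0 := (k+1)/2 with hi0
  have hi0m : i0 ≤ m := by omega
  have hi01 : 1 ≤ i0 := by omega
  have hle : chiOf p k ≤ i0 := chi_le hi01 (by rw [hS i0 hi0m]; omega)
  have hmm : i0 ∈ {i | 1 ≤ i ∧ k ≤ ∑ j ∈ Finset.Icc 1 i, p j} :=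
    ⟨hi01, by rw [hS i0 hi0m]; omega⟩
  have hmem : 1 ≤ chiOf p k ∧ k ≤ ∑ j ∈ Finset.Icc 1 (chiOf p k), p j :=
    Nat.sInf_mem ⟨i0, hmm⟩
  have h2 : k ≤ 2 * chiOf p k := by rw [← hS _ (hle.trans hi0m)]; exact hmem.2
  omega
/-- with `d_k := (n−1)k − 1 − ∑ₐ χ⁽ᵃ⁾_k` (the degree of the Hitchin line
bundle `L_k` in the presence of one additional regular puncture), if `d_N ≥ −1` and
`∑_{k=2}^{N} (d_k + 1) ≥ 0`, then `d_k ≥ −1` for every `k ∈ {2,…,N}`. -/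
theorem simpson_conditions_iff_OK
    (N n : ℕ) (hN : 2 ≤ N) (hn : 2 ≤ n)
    (p χ : Fin n → ℕ → ℕ)
    (h : ∀ a, IsVanishingOrderSeq N (p a) (χ a) ∧ 2 ≤ p a 1)
    (hdN : -1 ≤ ((n : ℤ) - 1) * (N : ℤ) - 1 - ∑ a, (χ a N : ℤ))
    (hsum : 0 ≤ ∑ k ∈ Finset.Icc 2 N,
        ((((n : ℤ) - 1) * (k : ℤ) - 1 - ∑ a, (χ a k : ℤ)) + 1)) :
    ∀ k, 2 ≤ k → k ≤ N → -1 ≤ ((n : ℤ) - 1) * (k : ℤ) - 1 - ∑ a, (χ a k : ℤ) := by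
  intro k hk2 hkN
  by_contra hcon
  push_neg at hcon
  have hp : ∀ a, IsPartitionOf N (p a) := fun a => ((h a).1).1
  have hχ : ∀ a (k' : ℕ), 1 ≤ k' → k' ≤ N → χ a k' = chiOf (p a) k' := fun a => ((h a).1).2
  have hk1 : (1:ℕ) ≤ k := by omega
  have hN1 : (1:ℕ) ≤ N := by omega
  have hchordZ : ∀ a : Fin n, (N:ℤ) * ((χ a k : ℤ) - 1) ≤ ((k:ℤ) - 1) * (χ a N : ℤ) := by
    intro a
    have hnat := chi_chord (hp a) hk2 hkN
    have h1 : 1 ≤ chiOf (p a) k := (chi_spec (hp a) hk1 hkN).1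
    rw [hχ a k hk1 hkN, hχ a N hN1 le_rfl]
    zify [h1, hk1] at hnat
    exact hnat
  have hsumchord : (N:ℤ) * ((∑ a, (χ a k : ℤ)) - n) ≤ ((k:ℤ) - 1) * ∑ a, (χ a N : ℤ) := by
    have H := Finset.sum_le_sum (fun a (_ : a ∈ Finset.univ) => hchordZ a)
    rw [← Finset.mul_sum, ← Finset.mul_sum, Finset.sum_sub_distrib, Finset.sum_const,
      Finset.card_univ, Fintype.card_fin] at H
    simpa using H
  have hApos : ((n:ℤ)-1) * k + 1 ≤ ∑ a, (χ a k : ℤ) := by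
    have h1 : ((n:ℤ)-1)*k < ∑ a, (χ a k : ℤ) := by linarith
    exact Int.add_one_le_iff.mpr h1
  have hBle : (∑ a, (χ a N : ℤ)) ≤ ((n:ℤ)-1) * N := by linarith
  have hk2' : (2:ℤ) ≤ (k:ℤ) := by exact_mod_cast hk2
  have hN2' : (2:ℤ) ≤ (N:ℤ) := by exact_mod_cast hN
  have hNZ : (0:ℤ) ≤ (N:ℤ) := by positivity
  have hlow : ((k:ℤ)-1) * (((n:ℤ)-1) * N) ≤ (N:ℤ) * ((∑ a, (χ a k : ℤ)) - n) := by
    have h1 := mul_le_mul_of_nonneg_left hApos hNZ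
    nlinarith
  have hBeq : (∑ a, (χ a N : ℤ)) = ((n:ℤ)-1) * N := by
    have h1 : ((k:ℤ)-1) * (∑ a, (χ a N : ℤ)) ≤ ((k:ℤ)-1) * (((n:ℤ)-1) * N) :=
      mul_le_mul_of_nonneg_left hBle (by linarith)
    have h2 : ((k:ℤ)-1) * (((n:ℤ)-1) * N) ≤ ((k:ℤ)-1) * (∑ a, (χ a N : ℤ)) :=
      le_trans hlow hsumchord
    exact mul_left_cancel₀ (by linarith : ((k:ℤ)-1) ≠ 0) (le_antisymm h1 h2)
  have hslack : ∀ a : Fin n,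
      ((k:ℤ)-1) * (χ a N : ℤ) - (N:ℤ) * ((χ a k : ℤ) - 1) = 0 := by
    have hnn : ∀ a ∈ Finset.univ,
        (0:ℤ) ≤ ((k:ℤ)-1) * (χ a N : ℤ) - (N:ℤ) * ((χ a k : ℤ) - 1) :=
      fun a _ => sub_nonneg.mpr (hchordZ a)
    have hs0 : ∑ a, (((k:ℤ)-1) * (χ a N : ℤ) - (N:ℤ) * ((χ a k : ℤ) - 1)) = 0 := by
      have hval : ∑ a, (((k:ℤ)-1) * (χ a N : ℤ) - (N:ℤ) * ((χ a k : ℤ) - 1))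
          = ((k:ℤ)-1) * (∑ a, (χ a N : ℤ)) - (N:ℤ) * ((∑ a, (χ a k : ℤ)) - n) := by
        rw [Finset.sum_sub_distrib, ← Finset.mul_sum, ← Finset.mul_sum,
          Finset.sum_sub_distrib, Finset.sum_const, Finset.card_univ, Fintype.card_fin]
        ring
      have hge := Finset.sum_nonneg hnn
      have hle' : ∑ a, (((k:ℤ)-1) * (χ a N : ℤ) - (N:ℤ) * ((χ a k : ℤ) - 1)) ≤ 0 := by
        rw [hval, hBeq]
        linarith
      linarith
    intro a
    exact (Finset.sum_eq_zero_iff_of_nonneg hnn).mp hs0 a (Finset.mem_univ a)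
  have hnateq : ∀ a : Fin n, (k - 1) * chiOf (p a) N = N * (chiOf (p a) k - 1) := by
    intro a
    have hz := hslack a
    rw [hχ a k hk1 hkN, hχ a N hN1 le_rfl] at hz
    have h1 : 1 ≤ chiOf (p a) k := (chi_spec (hp a) hk1 hkN).1
    zify [h1, hk1]
    linarith
  have heqs := fun a => chi_chord_eq (hp a) hk2 hkN (hnateq a)
  have hm1 : ∀ a : Fin n, 1 ≤ chiOf (p a) N := fun a => (chi_spec (hp a) hN1 le_rfl).1
  have hc2 : ∀ a : Fin n, 2 ≤ p a 1 := fun a => (h a).2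
  have h2m : ∀ a : Fin n, 2 * chiOf (p a) N ≤ N := by
    intro a
    calc 2 * chiOf (p a) N = chiOf (p a) N * 2 := by ring
      _ ≤ chiOf (p a) N * p a 1 := Nat.mul_le_mul_left _ (hc2 a)
      _ = N := (heqs a).2.symm
  have h2m' : ∀ a : Fin n, 2 * (χ a N : ℤ) ≤ (N:ℤ) := by
    intro a
    rw [hχ a N hN1 le_rfl]
    exact_mod_cast h2m a
  have h2B : 2 * (∑ a, (χ a N : ℤ)) ≤ (n:ℤ) * N := by
    have H := Finset.sum_le_sum (fun a (_ : a ∈ Finset.univ) => h2m' a)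
    rw [← Finset.mul_sum, Finset.sum_const, Finset.card_univ, Fintype.card_fin] at H
    simpa using H
  have hn2 : n = 2 := by
    by_contra hne
    have h3' : (3:ℤ) ≤ (n:ℤ) := by exact_mod_cast (by omega : 3 ≤ n)
    nlinarith [hBeq]
  subst hn2
  -- now n = 2
  have hkey : ∀ a : Fin 2, 2 * chiOf (p a) N = N := by
    have hmm : chiOf (p 0) N + chiOf (p 1) N = N := by
      have hB2 : (chiOf (p 0) N : ℤ) + (chiOf (p 1) N : ℤ) = (((2:ℕ):ℤ)-1) * N := by
        rw [← hχ 0 N hN1 le_rfl, ← hχ 1 N hN1 le_rfl,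
          ← Fin.sum_univ_two (fun a => (χ a N : ℤ))]
        exact hBeq
      have : ((chiOf (p 0) N : ℤ) + (chiOf (p 1) N : ℤ)) = (N:ℤ) := by push_cast at hB2 ⊢; linarith
      exact_mod_cast this
    refine Fin.forall_fin_two.mpr ⟨?_, ?_⟩ <;>
      · have u0 := h2m 0
        have u1 := h2m 1
        omega
  have hpa2 : ∀ a : Fin 2, p a 1 = 2 := by
    intro a
    have e1 : chiOf (p a) N * p a 1 = N := (heqs a).2.symm
    have e2 : chiOf (p a) N * 2 = N := by have := hkey a; omega
    exact Nat.eq_of_mul_eq_mul_left (hm1 a) (e1.trans e2.symm)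
  have hchi : ∀ (a : Fin 2) (k' : ℕ), 1 ≤ k' → k' ≤ N → χ a k' = (k'+1)/2 := by
    intro a k' h1 h2
    rw [hχ a k' h1 h2]
    refine chi_all2 (show N = chiOf (p a) N * 2 by have := hkey a; omega) ?_ h1 h2
    intro i hi1 hi2
    rw [(heqs a).1 i hi1 hi2, hpa2 a]
  refine absurd hsum (not_le.mpr ?_)
  have hterm : ∀ k' ∈ Finset.Icc 2 N,
      ((((2:ℕ):ℤ) - 1) * (k' : ℤ) - 1 - ∑ a, (χ a k' : ℤ)) + 1 ≤ 0 := by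
    intro k' hk'
    obtain ⟨ha, hb⟩ := Finset.mem_Icc.mp hk'
    rw [Fin.sum_univ_two (fun a => (χ a k' : ℤ)), hchi 0 k' (by omega) hb, hchi 1 k' (by omega) hb]
    have hdiv : k' ≤ 2 * ((k'+1)/2) := by omega
    have hdiv' : (k':ℤ) ≤ 2 * (((k'+1)/2 : ℕ) : ℤ) := by exact_mod_cast hdiv
    push_cast
    linarith
  have hstrict : ((((2:ℕ):ℤ) - 1) * (k : ℤ) - 1 - ∑ a, (χ a k : ℤ)) + 1 < 0 := by linarith
  have := Finset.sum_lt_sum hterm ⟨k, Finset.mem_Icc.mpr ⟨hk2, hkN⟩, by linarith⟩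
  simpa using this
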